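/- arXiv:1605.08432 — 2 statements merged into one kernel-verified Lean document; each statement's English description precedes it below -/
import Mathlib

section
/- For all real numbers a, b, one has √(1+b²) − √(1+a²) ≥ a(b−a)/√(1+a²) + (b−a)²/(2(1+max{a²,b²})^{3/2}). -/
/-- For all real numbers `a, b`:
`√(1+b²) − √(1+a²) ≥ a(b−a)/√(1+a²) + (b−a)²/(2(1+max{a²,b²})^{3/2})`. -/
theorem sqrt_one_add_sq_convexity_ineq (a b : ℝ) :
    a * (b - a) / Real.sqrt (1 + a ^ 2)
      + (b - a) ^ 2 / (2 * (1 + max (a ^ 2) (b ^ 2)) ^ ((3 : ℝ) / 2))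
      ≤ Real.sqrt (1 + b ^ 2) - Real.sqrt (1 + a ^ 2) := by
  set A := Real.sqrt (1 + a ^ 2) with hAdef
  set B := Real.sqrt (1 + b ^ 2) with hBdef
  have h1a : (0:ℝ) < 1 + a ^ 2 := by positivity
  have h1b : (0:ℝ) < 1 + b ^ 2 := by positivity
  have hA2 : A ^ 2 = 1 + a ^ 2 := Real.sq_sqrt h1a.le
  have hB2 : B ^ 2 = 1 + b ^ 2 := Real.sq_sqrt h1b.le
  have hApos : 0 < A := Real.sqrt_pos.mpr h1a
  have hBpos : 0 < B := Real.sqrt_pos.mpr h1b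
  set M := max (a ^ 2) (b ^ 2) with hM
  have hMa : a ^ 2 ≤ M := le_max_left _ _
  have hMb : b ^ 2 ≤ M := le_max_right _ _
  have hM0 : (0:ℝ) ≤ M := le_trans (sq_nonneg a) hMa
  set S := Real.sqrt (1 + M) with hSdef
  have h1M : (0:ℝ) ≤ 1 + M := by linarith
  have hS2 : S ^ 2 = 1 + M := Real.sq_sqrt h1M
  have hSpos : 0 < S := Real.sqrt_pos.mpr (by linarith)
  have hAS : A ≤ S := Real.sqrt_le_sqrt (by linarith)
  have hBS : B ≤ S := Real.sqrt_le_sqrt (by linarith)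
  have hC : (1 + M) ^ ((3 : ℝ) / 2) = S ^ 3 := by
    rw [hSdef, Real.sqrt_eq_rpow, ← Real.rpow_natCast ((1 + M) ^ ((1:ℝ)/2)) 3,
      ← Real.rpow_mul h1M]
    norm_num
  have hab : a * b ≤ M := by nlinarith [sq_nonneg (a - b)]
  have hABab : 0 ≤ A * B + a * b := by
    nlinarith [mul_pos hApos hBpos, sq_nonneg (A * B + a * b), sq_nonneg (a * b)]
  have hDpos : 0 < A * (A * B + a * b + 1) := by
    have : 0 < A * B + a * b + 1 := by linarith
    positivity
  have h2S3 : A * (A * B + a * b + 1) ≤ 2 * S ^ 3 := by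
    have hABS : A * B ≤ S ^ 2 := by
      nlinarith [mul_nonneg (sub_nonneg.2 hAS) hBpos.le,
        mul_nonneg (sub_nonneg.2 hBS) hSpos.le]
    nlinarith [hS2, mul_nonneg (sub_nonneg.2 hAS) (by linarith : (0:ℝ) ≤ A * B + a * b + 1)]
  have hmain : (b - a) ^ 2 / (2 * S ^ 3) ≤ (b - a) ^ 2 / (A * (A * B + a * b + 1)) := by
    gcongr
  have hstep : (b - a) ^ 2 / (A * (A * B + a * b + 1)) = B - A - a * (b - a) / A := by
    have hkey : (A * B - a * b - 1) * (A * B + a * b + 1) = (b - a) ^ 2 := by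
      linear_combination B ^ 2 * hA2 + (1 + a ^ 2) * hB2
    have hD1 : (A * B + a * b + 1) ≠ 0 := by linarith
    have h1 : B - A - a * (b - a) / A = (A * B - a * b - 1) / A := by
      field_simp
      linear_combination -hA2
    have h2 : (A * B - a * b - 1) = (b - a) ^ 2 / (A * B + a * b + 1) := by
      rw [eq_div_iff hD1]
      linear_combination hkey
    rw [h1, h2, div_div, mul_comm]
  rw [hC]
  linarith [hmain, hstep.le, hstep.ge]
end

section
/- For ω ∈ (0, 2π), the transcendental equation sin²(αω) = α² sin²(ω) has no complex roots α in the strip 0 < Re α ≤ 1/2. -/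
open Real

/-- modulus squared of complex sine. -/
lemma abs_sin_sq (z : ℂ) :
    ‖Complex.sin z‖ ^ 2 = Real.sin z.re ^ 2 + Real.sinh z.im ^ 2 := by
  rw [Complex.sin_eq]
  have h : (Complex.sin z.re * Complex.cosh z.im + Complex.cos z.re * Complex.sinh z.im * Complex.I)
      = Complex.ofReal (Real.sin z.re * Real.cosh z.im)
        + Complex.ofReal (Real.cos z.re * Real.sinh z.im) * Complex.I := by
    push_cast
    ring
  rw [h, Complex.sq_norm, Complex.normSq_add_mul_I]
  have h1 := Real.sin_sq_add_cos_sq z.re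
  have h2 := Real.cosh_sq z.im
  nlinarith [h1, h2]

lemma sq_le_sinh_sq (t : ℝ) : t ^ 2 ≤ Real.sinh t ^ 2 := by
  rcases le_or_gt 0 t with h | h
  · have := Real.self_le_sinh_iff.2 h
    nlinarith
  · have h' : -t ≤ Real.sinh (-t) := Real.self_le_sinh_iff.2 (by linarith)
    rw [Real.sinh_neg] at h'
    nlinarith

lemma key_real (ω x : ℝ) (hω1 : 0 < ω) (hω2 : ω < 2 * π) (hx1 : 0 < x) (hx2 : x ≤ 1 / 2) :
    x ^ 2 * Real.sin ω ^ 2 < Real.sin (x * ω) ^ 2 := by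
  have hs : 0 < Real.sin (ω / 2) :=
    Real.sin_pos_of_pos_of_lt_pi (by linarith) (by linarith)
  -- concavity of sin on [0, π]
  have hconc : 2 * x * Real.sin (ω / 2) ≤ Real.sin (x * ω) := by
    have hmem1 : ω / 2 ∈ Set.Icc (0:ℝ) π := ⟨by linarith, by linarith⟩
    have hmem2 : (0:ℝ) ∈ Set.Icc (0:ℝ) π := ⟨le_rfl, Real.pi_pos.le⟩
    have ha : (0:ℝ) ≤ 2 * x := by linarith
    have hb : (0:ℝ) ≤ 1 - 2 * x := by linarith
    have hab : 2 * x + (1 - 2 * x) = 1 := by ring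
    have h := (StrictConcaveOn.concaveOn strictConcaveOn_sin_Icc).2 hmem1 hmem2 ha hb hab
    simp only [smul_eq_mul, Real.sin_zero, mul_zero, add_zero] at h
    have h2 : 2 * x * (ω / 2) = x * ω := by ring
    rwa [h2] at h
  have hsin2 : Real.sin ω = 2 * Real.sin (ω / 2) * Real.cos (ω / 2) := by
    have := Real.sin_two_mul (ω / 2)
    rwa [show 2 * (ω / 2) = ω by ring] at this
  have hcos2 : Real.cos (ω / 2) ^ 2 < 1 := by
    have := Real.sin_sq_add_cos_sq (ω / 2)
    nlinarith
  have h2xs : 0 < 2 * x * Real.sin (ω / 2) := by positivity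
  have hsq : (2 * x * Real.sin (ω / 2)) ^ 2 ≤ Real.sin (x * ω) ^ 2 :=
    pow_le_pow_left₀ h2xs.le hconc 2
  have hlt : x ^ 2 * Real.sin ω ^ 2 < (2 * x * Real.sin (ω / 2)) ^ 2 := by
    rw [hsin2]
    nlinarith [hcos2, mul_pos (mul_pos hx1 hx1) (mul_pos hs hs)]
  linarith

/-- For `ω ∈ (0, 2π)`, the transcendental equation
`sin²(αω) = α² sin²(ω)` has no complex roots `α` in the strip `0 < Re α ≤ 1/2`. -/
theorem no_roots_in_strip (ω : ℝ) (hω : ω ∈ Set.Ioo 0 (2 * π)) (α : ℂ)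
    (h1 : 0 < α.re) (h2 : α.re ≤ 1 / 2) :
    Complex.sin (α * (ω : ℂ)) ^ 2 ≠ α ^ 2 * Complex.sin (ω : ℂ) ^ 2 := by
  obtain ⟨hω1, hω2⟩ := hω
  intro h
  have habs := congrArg (‖·‖) h
  rw [norm_pow, norm_mul, norm_pow, norm_pow, ← mul_pow, mul_pow] at habs
  have hre : (α * (ω : ℂ)).re = α.re * ω := by simp
  have him : (α * (ω : ℂ)).im = α.im * ω := by simp
  have hL : ‖Complex.sin (α * (ω : ℂ))‖ ^ 2
      = Real.sin (α.re * ω) ^ 2 + Real.sinh (α.im * ω) ^ 2 := by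
    rw [abs_sin_sq, hre, him]
  have hsr : ‖Complex.sin (ω : ℂ)‖ ^ 2 = Real.sin ω ^ 2 := by
    rw [← Complex.ofReal_sin, Complex.norm_real, Real.norm_eq_abs, sq_abs]
  have hαsq : ‖α‖ ^ 2 = α.re ^ 2 + α.im ^ 2 := by
    rw [Complex.sq_norm, Complex.normSq_apply]; ring
  rw [hL, hsr, hαsq] at habs
  have hA := key_real ω α.re hω1 hω2 h1 h2
  have hB : α.im ^ 2 * Real.sin ω ^ 2 ≤ Real.sinh (α.im * ω) ^ 2 := by
    have h1' : (α.im * ω) ^ 2 ≤ Real.sinh (α.im * ω) ^ 2 := sq_le_sinh_sq _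
    have h2' : Real.sin ω ^ 2 ≤ ω ^ 2 := Real.sin_sq_le_sq
    nlinarith [sq_nonneg α.im]
  nlinarith [hA, hB, habs]
end
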